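/- Let S ⊆ ℤ be thickly syndetic, let x = 1_{ℤ∖S} ∈ {0,1}^ℤ (x(n)=0 iff n ∈ S), and let X_S be the orbit closure of x under the left shift T. Then the all-zero sequence 𝟎 is the unique minimal point of (X_S, T). -/
import Mathlib


/-- A subset of ℤ is syndetic if it has bounded gaps. -/
def Syndetic (S : Set ℤ) : Prop :=
  ∃ N : ℕ, ∀ m : ℤ, ∃ i : ℕ, i ≤ N ∧ m + i ∈ S

/-- A subset of ℤ is thickly syndetic if for every N, the set of starting positions
of runs of N consecutive integers contained in S is syndetic. -/
def ThicklySyndetic (S : Set ℤ) : Prop :=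
  ∀ N : ℕ, Syndetic {m : ℤ | ∀ i : ℕ, i < N → m + i ∈ S}

/-- The left shift on two-sided binary sequences. -/
def shiftZ (y : ℤ → Bool) : ℤ → Bool := fun n => y (n + 1)

/-- The inverse (right) shift. -/
def shiftZInv (y : ℤ → Bool) : ℤ → Bool := fun n => y (n - 1)

/-- The two-sided orbit of a point under the shift. -/
def orbitZ (x : ℤ → Bool) : Set (ℤ → Bool) :=
  {y | ∃ k : ℤ, y = fun n => x (n + k)}

/-- A set is shift-invariant. -/
def ShiftInvariant (K : Set (ℤ → Bool)) : Prop :=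
  (∀ y ∈ K, shiftZ y ∈ K) ∧ (∀ y ∈ K, shiftZInv y ∈ K)

/-- A minimal subset of the full shift. -/
def IsMinimalSubshift (K : Set (ℤ → Bool)) : Prop :=
  K.Nonempty ∧ IsClosed K ∧ ShiftInvariant K ∧
    ∀ K' ⊆ K, K'.Nonempty → IsClosed K' → ShiftInvariant K' → K' = K

/-- z is a minimal point if its orbit closure is a minimal system. -/
def IsMinimalPointShift (z : ℤ → Bool) : Prop :=
  IsMinimalSubshift (closure (orbitZ z))

/-- Membership in the closure of a set of binary sequences: agreement on every
finite window with some element of the set. -/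
lemma mem_closure_pi_iff {A : Set (ℤ → Bool)} {z : ℤ → Bool} :
    z ∈ closure A ↔ ∀ F : Finset ℤ, ∃ y ∈ A, ∀ n ∈ F, y n = z n := by
  constructor
  · intro h F
    have hU : IsOpen {y : ℤ → Bool | ∀ n ∈ F, y n = z n} := by
      have he : {y : ℤ → Bool | ∀ n ∈ F, y n = z n} =
          Set.pi (F : Set ℤ) (fun n => {z n}) := by
        ext y; simp [Set.mem_pi]
      rw [he]
      exact isOpen_set_pi F.finite_toSet (fun i _ => isOpen_discrete _)
    obtain ⟨y, hy1, hy2⟩ := (mem_closure_iff).mp h _ hU (by simp)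
    exact ⟨y, hy2, hy1⟩
  · intro h
    rw [mem_closure_iff_nhds]
    intro U hU
    rw [nhds_pi, Filter.mem_pi] at hU
    obtain ⟨I, hI, t, ht, hsub⟩ := hU
    obtain ⟨y, hyA, hy⟩ := h hI.toFinset
    refine ⟨y, hsub fun i hi => ?_, hyA⟩
    rw [hy i (hI.mem_toFinset.mpr hi)]
    exact mem_of_mem_nhds (ht i)

/-- If z has arbitrarily long runs of `false`, then the zero sequence is in its
orbit closure. -/
lemma zero_mem_closure_orbit {z : ℤ → Bool}
    (h : ∀ N : ℕ, ∃ m : ℤ, ∀ i : ℕ, i < N → z (m + i) = false) :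
    (fun _ => false) ∈ closure (orbitZ z) := by
  rw [mem_closure_pi_iff]
  intro F
  set M : ℕ := F.sup (fun n => n.natAbs) with hM
  have hbound : ∀ n ∈ F, n.natAbs ≤ M := fun n hn => Finset.le_sup hn
  obtain ⟨m, hm⟩ := h (2 * M + 1)
  refine ⟨fun n => z (n + (m + M)), ⟨m + M, rfl⟩, ?_⟩
  intro n hn
  have hb := hbound n hn
  have hi : (n + (M:ℤ)).toNat < 2 * M + 1 := by omega
  have := hm _ hi
  have heq : (m + (((n + (M:ℤ)).toNat : ℕ) : ℤ)) = n + (m + M) := by omega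
  rw [heq] at this
  exact this

/-- Every point in the orbit closure of the indicator of the complement of a
thickly syndetic set has arbitrarily long runs of `false`. -/
lemma runs_of_mem_closure {S : Set ℤ} (hS : ThicklySyndetic S) {x z : ℤ → Bool}
    (hx : ∀ n : ℤ, x n = false ↔ n ∈ S) (hz : z ∈ closure (orbitZ x)) :
    ∀ N : ℕ, ∃ m : ℤ, ∀ i : ℕ, i < N → z (m + i) = false := by
  intro N
  obtain ⟨g, hg⟩ := hS N
  obtain ⟨y, ⟨k, rfl⟩, hy⟩ := mem_closure_pi_iff.mp hz (Finset.Icc 0 (g + N : ℤ))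
  obtain ⟨i, hig, hi⟩ := hg k
  refine ⟨(i:ℤ), fun j hj => ?_⟩
  have hmem : ((i:ℤ) + j) ∈ Finset.Icc (0:ℤ) (g + N) := by
    simp only [Finset.mem_Icc]; omega
  rw [← hy _ hmem]
  have hmemS := hi j hj
  have hfalse := (hx (k + i + j)).mpr hmemS
  have heq : ((i:ℤ) + j + k) = k + i + j := by ring
  show x ((i:ℤ) + j + k) = false
  rw [heq]
  exact hfalse

lemma orbit_zero : orbitZ (fun _ => false) = {fun _ => false} := by
  ext y
  constructor
  · rintro ⟨k, rfl⟩; rfl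
  · rintro rfl; exact ⟨0, rfl⟩

lemma zero_minimal : IsMinimalPointShift (fun _ => false) := by
  unfold IsMinimalPointShift
  rw [orbit_zero, closure_singleton]
  refine ⟨⟨_, rfl⟩, isClosed_singleton, ⟨?_, ?_⟩, ?_⟩
  · rintro y rfl; rfl
  · rintro y rfl; rfl
  · intro K' hsub hne _ _
    rcases Set.subset_singleton_iff_eq.mp hsub with h | h
    · exact absurd h (by simpa [Set.nonempty_iff_ne_empty] using hne)
    · exact h

/-- If S is thickly syndetic and x = 1_{ℤ∖S}, then the all-zero sequence is the
unique minimal point of the orbit closure X_S of x. -/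
theorem unique_minimal_point_of_thicklySyndetic (S : Set ℤ) (hS : ThicklySyndetic S)
    (x : ℤ → Bool) (hx : ∀ n : ℤ, x n = false ↔ n ∈ S) :
    {z : ℤ → Bool | z ∈ closure (orbitZ x) ∧ IsMinimalPointShift z} =
      {fun _ => false} := by
  have hself : ∀ w : ℤ → Bool, w ∈ closure (orbitZ w) := fun w =>
    subset_closure ⟨0, funext fun n => by rw [add_zero]⟩
  ext z
  simp only [Set.mem_setOf_eq, Set.mem_singleton_iff]
  constructor
  · rintro ⟨hzX, hmin⟩
    have hruns := runs_of_mem_closure hS hx hzX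
    have h0 : (fun _ => false) ∈ closure (orbitZ z) := zero_mem_closure_orbit hruns
    obtain ⟨hne, hcl, hinv, hmax⟩ := hmin
    have hK' : ({fun _ => false} : Set (ℤ → Bool)) = closure (orbitZ z) := by
      refine hmax _ (Set.singleton_subset_iff.mpr h0) ⟨_, rfl⟩ isClosed_singleton
        ⟨?_, ?_⟩
      · rintro y rfl; rfl
      · rintro y rfl; rfl
    have hz := hself z
    rw [← hK'] at hz
    exact hz
  · rintro rfl
    exact ⟨zero_mem_closure_orbit (runs_of_mem_closure hS hx (hself x)), zero_minimal⟩
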